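/- For t ∈ ℝ let A_t⁻ := diag(2(t²+1), 1/10, 0) ∈ ℝ^{3×3}, P := diag(1, 1, 0), and for x = (x₁, x₂, x₃)ᵀ ∈ ℝ³ let F(t,x) := (−x₁³, x₃, t x₂ + x₃)ᵀ and G(t,x) := diag(sin t, c x₁², 0). If c ∈ ℝ and p₁ > 1 satisfy (p₁ − 1) c² ≤ 300, then for all t ∈ ℝ and x, y ∈ ℝ³: 2⟨Px − Py, A_t⁻ F(t,x) − A_t⁻ F(t,y)⟩ + (p₁ − 1)|A_t⁻ G(t,x) − A_t⁻ G(t,y)|² ≤ (1/10)|x − y|². -/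
import Mathlib


open Matrix

/-- Euclidean norm of a vector in `ℝ^d`. -/
noncomputable def vnorm {d : ℕ} (x : Fin d → ℝ) : ℝ :=
  Real.sqrt (∑ i, (x i) ^ 2)

/-- Euclidean inner product on `ℝ^d`. -/
def vdot {d : ℕ} (x y : Fin d → ℝ) : ℝ := ∑ i, x i * y i

/-- Frobenius norm of a real matrix: `|B| = sqrt (trace (Bᵀ * B))`. -/
noncomputable def mnorm {d m : ℕ} (B : Matrix (Fin d) (Fin m) ℝ) : ℝ :=
  Real.sqrt ((Bᵀ * B).trace)

/-- `A_t⁻ = diag(2(t²+1), 1/10, 0)`. -/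
noncomputable def Am18 (t : ℝ) : Matrix (Fin 3) (Fin 3) ℝ :=
  Matrix.diagonal ![2 * (t ^ 2 + 1), 1/10, 0]

/-- `P = diag(1, 1, 0)`. -/
def P18 : Matrix (Fin 3) (Fin 3) ℝ := Matrix.diagonal ![1, 1, 0]

/-- `F(t,x) = (−x₁³, x₃, t x₂ + x₃)ᵀ`. -/
def F18 (t : ℝ) (x : Fin 3 → ℝ) : Fin 3 → ℝ := ![-(x 0) ^ 3, x 2, t * x 1 + x 2]

/-- `G(t,x) = diag(sin t, c x₁², 0)`. -/
noncomputable def G18 (c : ℝ) (t : ℝ) (x : Fin 3 → ℝ) : Matrix (Fin 3) (Fin 3) ℝ :=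
  Matrix.diagonal ![Real.sin t, c * (x 0) ^ 2, 0]

theorem stmt18 (c p1 : ℝ) (hp1 : 1 < p1) (hc : (p1 - 1) * c ^ 2 ≤ 300) :
    ∀ (t : ℝ) (x y : Fin 3 → ℝ),
      2 * vdot (P18.mulVec x - P18.mulVec y)
          ((Am18 t).mulVec (F18 t x) - (Am18 t).mulVec (F18 t y)) +
        (p1 - 1) * mnorm (Am18 t * G18 c t x - Am18 t * G18 c t y) ^ 2 ≤
        (1/10) * vnorm (x - y) ^ 2 := by
  intro t x y
  have hmn : mnorm (Am18 t * G18 c t x - Am18 t * G18 c t y) ^ 2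
      = (c/10 * ((x 0) ^ 2 - (y 0) ^ 2)) ^ 2 := by
    have htr : ((Am18 t * G18 c t x - Am18 t * G18 c t y)ᵀ *
        (Am18 t * G18 c t x - Am18 t * G18 c t y)).trace
        = (c/10 * ((x 0) ^ 2 - (y 0) ^ 2)) ^ 2 := by
      simp [Am18, G18, Matrix.diagonal_mul_diagonal, ← Matrix.diagonal_sub,
        Matrix.trace, Matrix.diag, Fin.sum_univ_three, Matrix.mul_apply,
        Matrix.transpose_apply, Matrix.diagonal]
      ring
    rw [mnorm, htr, Real.sqrt_sq_eq_abs, sq_abs]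
  have hvn : vnorm (x - y) ^ 2
      = (x 0 - y 0) ^ 2 + (x 1 - y 1) ^ 2 + (x 2 - y 2) ^ 2 := by
    rw [vnorm, Real.sq_sqrt]
    · simp [Fin.sum_univ_three]
    · positivity
  rw [hmn, hvn]
  simp only [vdot, P18, Am18, F18, Matrix.mulVec_diagonal, Fin.sum_univ_three,
    Pi.sub_apply, Matrix.mulVec, dotProduct, Matrix.diagonal,
    Matrix.of_apply, Matrix.cons_val_zero, Matrix.cons_val_one, Matrix.head_cons,
    Matrix.cons_val_two, Matrix.tail_cons]
  norm_num [Fin.ext_iff]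
  set a := x 0; set b := y 0
  have key : (p1 - 1) * (c/10 * (a ^ 2 - b ^ 2)) ^ 2
      ≤ 4 * (a ^ 2 + a*b + b ^ 2) * (a - b) ^ 2 := by
    have h1 : (p1 - 1) * c ^ 2 * ((a+b) * (a-b)) ^ 2 ≤ 300 * ((a+b)*(a-b)) ^ 2 := by
      nlinarith [sq_nonneg ((a+b)*(a-b))]
    nlinarith [sq_nonneg ((a-b)*(a-b)), sq_nonneg ((a+b)*(a-b)), sq_nonneg (a-b),
      mul_nonneg (sq_nonneg (a-b)) (sq_nonneg (a-b))]
  have ht : (1:ℝ) ≤ t ^ 2 + 1 := by nlinarith [sq_nonneg t]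
  nlinarith [key, sq_nonneg (x 1 - y 1 - (x 2 - y 2)), sq_nonneg (a - b),
    mul_nonneg (mul_nonneg (sq_nonneg t) (sq_nonneg (a-b))) (by nlinarith [sq_nonneg (a+b), sq_nonneg (a-b)] : (0:ℝ) ≤ a^2 + a*b + b^2)]
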